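/- Flat-bottom reduction of the non-hydrostatic shallow water extension to the Serre equations: suppose the depth d is a positive constant, ρ, g > 0, h, u are three times continuously differentiable with h > 0, mass conservation ∂_t h + ∂_x(h·u) = 0 holds, and p = −(ρ/3)·h²·( ∂_x∂_t u + u·∂_x² u − (∂_x u)² ). Then the horizontal momentum equation ∂_t(h·u) + ∂_x( h·u² + (g/2)·h² ) = −(1/ρ)·∂_x(h·p) holds at every point if and only if the Serre momentum equation ∂_t u + u·∂_x u + g·∂_x h = (1/(3h))·∂_x[ h³·( ∂_x∂_t u + u·∂_x² u − (∂_x u)² ) ] holds at every point. -/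

import Mathlib

/-- Flat-bottom reduction of the non-hydrostatic shallow water extension to
the Serre equations: with constant depth `d > 0`, `ρ, g > 0`, `h, u` three
times continuously differentiable with `h > 0`, mass conservation, and
`p = −(ρ/3) h² (∂_x∂_t u + u ∂_x² u − (∂_x u)²)`, the horizontal momentum
equation `∂_t(h u) + ∂_x(h u² + (g/2) h²) = −(1/ρ) ∂_x(h p)` holds at every
point if and only if the Serre momentum equation
`∂_t u + u ∂_x u + g ∂_x h = (1/(3h)) ∂_x[ h³ (∂_x∂_t u + u ∂_x² u − (∂_x u)²) ]`
holds at every point. -/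
theorem flat_bottom_reduction_to_serre
    (ρ g d : ℝ) (hρ : 0 < ρ) (hg : 0 < g) (hd : 0 < d)
    (h u p : ℝ → ℝ → ℝ)
    (hh : ContDiff ℝ 3 (fun q : ℝ × ℝ => h q.1 q.2))
    (hu : ContDiff ℝ 3 (fun q : ℝ × ℝ => u q.1 q.2))
    (hhpos : ∀ x t, 0 < h x t)
    (hmass : ∀ x t,
      deriv (fun s => h x s) t + deriv (fun y => h y t * u y t) x = 0)
    (hp : ∀ x t, p x t = -(ρ / 3) * (h x t) ^ 2 *
      (deriv (fun y => deriv (fun s => u y s) t) x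
        + u x t * deriv (deriv (fun y => u y t)) x
        - (deriv (fun y => u y t) x) ^ 2)) :
    (∀ x t : ℝ,
        deriv (fun s => h x s * u x s) t
            + deriv (fun y => h y t * (u y t) ^ 2 + (g / 2) * (h y t) ^ 2) x
          = -(1 / ρ) * deriv (fun y => h y t * p y t) x)
      ↔
    (∀ x t : ℝ,
        deriv (fun s => u x s) t + u x t * deriv (fun y => u y t) x
            + g * deriv (fun y => h y t) x
          = (1 / (3 * h x t)) *
              deriv (fun y =>
                (h y t) ^ 3 *
                  (deriv (fun z => deriv (fun s => u z s) t) y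
                    + u y t * deriv (deriv (fun z => u z t)) y
                    - (deriv (fun z => u z t) y) ^ 2)) x) := by
  have Hh : Differentiable ℝ (fun q : ℝ × ℝ => h q.1 q.2) := hh.differentiable (by norm_num)
  have Hu : Differentiable ℝ (fun q : ℝ × ℝ => u q.1 q.2) := hu.differentiable (by norm_num)
  have hhx : ∀ x t, DifferentiableAt ℝ (fun y => h y t) x := fun x t =>
    (Hh.comp (differentiable_id.prodMk (differentiable_const t))).differentiableAt
  have hht : ∀ x t, DifferentiableAt ℝ (fun s => h x s) t := fun x t =>
    (Hh.comp ((differentiable_const x).prodMk differentiable_id)).differentiableAt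
  have hux : ∀ x t, DifferentiableAt ℝ (fun y => u y t) x := fun x t =>
    (Hu.comp (differentiable_id.prodMk (differentiable_const t))).differentiableAt
  have hut : ∀ x t, DifferentiableAt ℝ (fun s => u x s) t := fun x t =>
    (Hu.comp ((differentiable_const x).prodMk differentiable_id)).differentiableAt
  refine forall_congr' fun x => forall_congr' fun t => ?_
  set Q : ℝ → ℝ := fun y =>
    deriv (fun z => deriv (fun s => u z s) t) y
      + u y t * deriv (deriv (fun z => u z t)) y
      - (deriv (fun z => u z t) y) ^ 2 with hQ
  have hne : h x t ≠ 0 := (hhpos x t).ne'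
  set D : ℝ := deriv (fun y => (h y t) ^ 3 * Q y) x with hD
  -- pressure rewrite
  have hpfun : (fun y => h y t * p y t) = fun y => -(ρ / 3) * ((h y t) ^ 3 * Q y) := by
    funext y
    rw [hp]
    simp only [hQ]
    ring
  have hDp : deriv (fun y => h y t * p y t) x = -(ρ / 3) * D := by
    rw [hpfun, deriv_const_mul_field]
  have E1 : deriv (fun s => h x s * u x s) t
      = deriv (fun s => h x s) t * u x t + h x t * deriv (fun s => u x s) t :=
    ((hht x t).hasDerivAt.mul (hut x t).hasDerivAt).deriv
  have E2 : deriv (fun y => h y t * (u y t) ^ 2 + (g / 2) * (h y t) ^ 2) x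
      = deriv (fun y => h y t) x * (u x t) ^ 2
        + h x t * (2 * u x t * deriv (fun y => u y t) x)
        + (g / 2) * (2 * h x t * deriv (fun y => h y t) x) := by
    have := (((hhx x t).hasDerivAt.fun_mul
        ((hux x t).hasDerivAt.fun_pow 2)).fun_add
        (((hhx x t).hasDerivAt.fun_pow 2).const_mul (g / 2))).deriv
    rw [this]; ring
  have Emass : deriv (fun s => h x s) t
      + (deriv (fun y => h y t) x * u x t + h x t * deriv (fun y => u y t) x) = 0 := by
    have hm := hmass x t
    rwa [((hhx x t).hasDerivAt.fun_mul (hux x t).hasDerivAt).deriv] at hm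
  rw [E1, E2, hDp]
  have hrho : -(1 / ρ) * (-(ρ / 3) * D) = (1 / 3) * D := by
    field_simp
  rw [hrho]
  constructor
  · intro H
    have hS : h x t * (deriv (fun s => u x s) t + u x t * deriv (fun y => u y t) x
        + g * deriv (fun y => h y t) x) = (1 / 3) * D := by
      linear_combination H - u x t * Emass
    field_simp
    linear_combination 3 * hS
  · intro H
    have hS : h x t * (deriv (fun s => u x s) t + u x t * deriv (fun y => u y t) x
        + g * deriv (fun y => h y t) x) = (1 / 3) * D := by
      rw [H]
      field_simp
    linear_combination hS + u x t * Emass
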